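/- For every ν < 0 and every real x, the strict Turán-type inequality H_{ν−1}(x)² − H_ν(x)·H_{ν−2}(x) > 0 holds for Hermite functions of negative degree. -/

import Mathlib

open MeasureTheory Real Filter

noncomputable def G (ν x : ℝ) : ℝ :=
  ∫ t in Set.Ioi (0:ℝ), t ^ (-ν - 1) * Real.exp (-t^2/2 - x*t)

noncomputable def D (ν x : ℝ) : ℝ :=
  Real.exp (-x^2/4) / Real.Gamma (-ν) * G ν x

noncomputable def H (ν x : ℝ) : ℝ :=
  (2:ℝ) ^ (ν / 2) * Real.exp (x^2 / 2) * D ν (x * Real.sqrt 2)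

noncomputable def F (k y : ℝ) : ℝ :=
  ∫ t in Set.Ioi (0:ℝ), t ^ k * Real.exp (-t^2/2 - y*t)

lemma integrable_F (k y : ℝ) (hk : -1 < k) :
    IntegrableOn (fun t : ℝ => t ^ k * Real.exp (-t^2/2 - y*t)) (Set.Ioi 0) := by
  have h := Real.GammaIntegral_convergent (s := k+1) (by linarith)
  have h2 := h.const_mul (Real.exp ((1-y)^2/2))
  refine h2.mono' ?_ ?_
  · refine (ContinuousOn.mul ?_ ?_).aestronglyMeasurable measurableSet_Ioi
    · exact fun t ht => (Real.continuousAt_rpow_const t k (Or.inl (ne_of_gt ht))).continuousWithinAt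
    · exact (Real.continuous_exp.comp (by continuity)).continuousOn
  · filter_upwards [ae_restrict_mem measurableSet_Ioi] with t ht
    have ht0 : (0:ℝ) < t := ht
    rw [norm_mul, Real.norm_rpow_of_nonneg ht0.le, Real.norm_of_nonneg ht0.le,
      Real.norm_of_nonneg (Real.exp_pos _).le]
    have hb : Real.exp (-t^2/2 - y*t) ≤ Real.exp ((1-y)^2/2) * Real.exp (-t) := by
      rw [← Real.exp_add]; apply Real.exp_le_exp.2; nlinarith [sq_nonneg (t - (1-y))]
    calc t ^ k * Real.exp (-t^2/2 - y*t)
        ≤ t ^ k * (Real.exp ((1-y)^2/2) * Real.exp (-t)) :=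
          mul_le_mul_of_nonneg_left hb (Real.rpow_nonneg ht0.le k)
      _ = Real.exp ((1-y)^2/2) * (Real.exp (-t) * t ^ (k+1-1)) := by
          rw [add_sub_cancel_right]; ring

lemma F_pos (k y : ℝ) (hk : -1 < k) : 0 < F k y := by
  rw [F]
  have hi := integrable_F k y hk
  refine (setIntegral_pos_iff_support_of_nonneg_ae ?_ hi).2 ?_
  · filter_upwards [ae_restrict_mem measurableSet_Ioi] with t ht
    have ht0 : (0:ℝ) < t := ht
    positivity
  · have hsub : Set.Ioi (0:ℝ) ⊆ Function.support (fun t : ℝ => t ^ k * Real.exp (-t^2/2 - y*t)) ∩ Set.Ioi 0 := by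
      intro t ht
      have ht0 : (0:ℝ) < t := ht
      refine ⟨?_, ht⟩
      simp only [Function.mem_support]
      positivity
    calc (0:ENNReal) < volume (Set.Ioi (0:ℝ)) := by simp
      _ ≤ _ := measure_mono hsub

lemma quad_pos (k y lam : ℝ) (hk : -1 < k) :
    0 < ∫ t in Set.Ioi (0:ℝ), t ^ k * (t - lam)^2 * Real.exp (-t^2/2 - y*t) := by
  have hi : IntegrableOn (fun t : ℝ => t ^ k * (t - lam)^2 * Real.exp (-t^2/2 - y*t)) (Set.Ioi 0) := by
    have h0 := integrable_F k y hk
    have h1 := integrable_F (k+1) y (by linarith)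
    have h2 := integrable_F (k+2) y (by linarith)
    have hI : IntegrableOn (fun t : ℝ => t ^ (k+2) * Real.exp (-t^2/2 - y*t) + -2*lam * (t ^ (k+1) * Real.exp (-t^2/2 - y*t)) + lam^2 * (t ^ k * Real.exp (-t^2/2 - y*t))) (Set.Ioi 0) :=
      ((h2.add ((h1.const_mul (-2*lam)))).add (h0.const_mul (lam^2)))
    refine hI.congr_fun ?_ measurableSet_Ioi
    intro t ht
    have ht0 : (0:ℝ) < t := ht
    have e1 : t ^ (k+1) = t ^ k * t := by
      rw [Real.rpow_add ht0, Real.rpow_one]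
    have e2 : t ^ (k+2) = t ^ k * (t*t) := by
      rw [show k+2 = k+1+1 by ring, Real.rpow_add ht0, Real.rpow_one, e1]; ring
    simp only []
    rw [e1, e2]; ring
  refine (setIntegral_pos_iff_support_of_nonneg_ae ?_ hi).2 ?_
  · filter_upwards [ae_restrict_mem measurableSet_Ioi] with t ht
    have ht0 : (0:ℝ) < t := ht
    positivity
  · have hsub : Set.Ioi (0:ℝ) \ {lam} ⊆
        Function.support (fun t : ℝ => t ^ k * (t - lam)^2 * Real.exp (-t^2/2 - y*t)) ∩ Set.Ioi 0 := by
      rintro t ⟨ht, hne⟩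
      have ht0 : (0:ℝ) < t := ht
      have h2 : t - lam ≠ 0 := sub_ne_zero.2 (by simpa using hne)
      refine ⟨?_, ht⟩
      simp only [Function.mem_support]
      positivity
    have : volume (Set.Ioi (0:ℝ) \ {lam}) = volume (Set.Ioi (0:ℝ)) :=
      measure_diff_null (measure_singleton lam)
    calc (0:ENNReal) < volume (Set.Ioi (0:ℝ) \ {lam}) := by rw [this]; simp
      _ ≤ _ := measure_mono hsub

lemma quad_eq (k y lam : ℝ) (hk : -1 < k) :
    (∫ t in Set.Ioi (0:ℝ), t ^ k * (t - lam)^2 * Real.exp (-t^2/2 - y*t))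
      = F (k+2) y - 2*lam * F (k+1) y + lam^2 * F k y := by
  have h0 := integrable_F k y hk
  have h1 := integrable_F (k+1) y (by linarith)
  have h2 := integrable_F (k+2) y (by linarith)
  have hIa : Integrable (fun t : ℝ => t ^ (k+2) * Real.exp (-t^2/2 - y*t)
      + -2*lam * (t ^ (k+1) * Real.exp (-t^2/2 - y*t)))
      (volume.restrict (Set.Ioi 0)) := h2.add (h1.const_mul _)
  have hIb : Integrable (fun t : ℝ => lam^2 * (t ^ k * Real.exp (-t^2/2 - y*t)))
      (volume.restrict (Set.Ioi 0)) := h0.const_mul _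
  have hIc : Integrable (fun t : ℝ => -2*lam * (t ^ (k+1) * Real.exp (-t^2/2 - y*t)))
      (volume.restrict (Set.Ioi 0)) := h1.const_mul _
  have step : (∫ t in Set.Ioi (0:ℝ), t ^ k * (t - lam)^2 * Real.exp (-t^2/2 - y*t))
      = ∫ t in Set.Ioi (0:ℝ), (t ^ (k+2) * Real.exp (-t^2/2 - y*t)
          + -2*lam * (t ^ (k+1) * Real.exp (-t^2/2 - y*t))
          + lam^2 * (t ^ k * Real.exp (-t^2/2 - y*t))) := by
    refine setIntegral_congr_fun measurableSet_Ioi ?_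
    intro t ht
    have ht0 : (0:ℝ) < t := ht
    have e1 : t ^ (k+1) = t ^ k * t := by rw [Real.rpow_add ht0, Real.rpow_one]
    have e2 : t ^ (k+2) = t ^ k * (t*t) := by
      rw [show k+2 = k+1+1 by ring, Real.rpow_add ht0, Real.rpow_one, e1]; ring
    simp only []
    rw [e1, e2]; ring
  rw [step, integral_add hIa hIb, integral_add h2 hIc,
    integral_const_mul _ _, integral_const_mul _ _]
  rw [F, F, F]; ring

lemma cs_lt (k y : ℝ) (hk : -1 < k) : F (k+1) y ^ 2 < F k y * F (k+2) y := by
  have hA := F_pos k y hk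
  have hQ := quad_pos k y (F (k+1) y / F k y) hk
  rw [quad_eq k y _ hk] at hQ
  have hne : F k y ≠ 0 := ne_of_gt hA
  have e : F k y * (F (k+2) y - 2*(F (k+1) y / F k y) * F (k+1) y
      + (F (k+1) y / F k y)^2 * F k y) = F k y * F (k+2) y - F (k+1) y ^ 2 := by
    field_simp; ring
  have hpos : 0 < F k y * F (k+2) y - F (k+1) y ^ 2 := by
    rw [← e]; exact mul_pos hA hQ
  linarith

lemma parts (k y : ℝ) (hk : -1 < k) :
    F (k+2) y + y * F (k+1) y = (k+1) * F k y := by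
  have h0 := integrable_F k y hk
  have h1 := integrable_F (k+1) y (by linarith)
  have h2 := integrable_F (k+2) y (by linarith)
  have hcont : ContinuousWithinAt (fun t : ℝ => t ^ (k+1) * Real.exp (-t^2/2 - y*t))
      (Set.Ici 0) 0 := by
    apply ContinuousAt.continuousWithinAt
    apply ContinuousAt.mul
    · exact Real.continuousAt_rpow_const 0 (k+1) (Or.inr (by linarith))
    · exact (Real.continuous_exp.comp (by continuity)).continuousAt
  have hderiv : ∀ t ∈ Set.Ioi (0:ℝ),
      HasDerivAt (fun t : ℝ => t ^ (k+1) * Real.exp (-t^2/2 - y*t))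
      ((k+1) * (t ^ k * Real.exp (-t^2/2 - y*t))
        - t ^ (k+2) * Real.exp (-t^2/2 - y*t)
        - y * (t ^ (k+1) * Real.exp (-t^2/2 - y*t))) t := by
    intro t ht
    have ht0 : (0:ℝ) < t := ht
    have hA : HasDerivAt (fun s : ℝ => s ^ (k+1)) ((k+1) * t ^ k) t := by
      have := Real.hasDerivAt_rpow_const (x := t) (p := k+1) (Or.inl ht0.ne')
      simpa using this
    have hin : HasDerivAt (fun s : ℝ => -s^2/2 - y*s) (-t - y) t := by
      have h := (((hasDerivAt_pow 2 t).neg).div_const 2).sub ((hasDerivAt_id t).const_mul y)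
      refine h.congr_deriv ?_
      push_cast; ring
    have hE : HasDerivAt (fun s : ℝ => Real.exp (-s^2/2 - y*s))
        (Real.exp (-t^2/2 - y*t) * (-t - y)) t := hin.exp
    have hmul := hA.mul hE
    have e2 : t ^ (k+2) = t ^ (k+1) * t := by
      rw [show k+2 = k+1+1 by ring, Real.rpow_add ht0, Real.rpow_one]
    refine hmul.congr_deriv ?_
    rw [e2]; ring
  have htop : Tendsto (fun t : ℝ => t ^ (k+1) * Real.exp (-t^2/2 - y*t)) atTop (nhds 0) := by
    have hM := tendsto_rpow_mul_exp_neg_mul_atTop_nhds_zero (k+1) 1 one_pos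
    simp only [neg_mul, one_mul] at hM
    apply squeeze_zero' ?_ ?_ hM
    · filter_upwards [eventually_ge_atTop (1:ℝ)] with t ht
      have ht0 : (0:ℝ) < t := by linarith
      positivity
    · filter_upwards [eventually_ge_atTop (max 1 (2*(1-y)))] with t ht
      have ht1 : (1:ℝ) ≤ t := le_trans (le_max_left _ _) ht
      have ht2 : 2*(1-y) ≤ t := le_trans (le_max_right _ _) ht
      have ht0 : (0:ℝ) < t := by linarith
      apply mul_le_mul_of_nonneg_left _ (Real.rpow_nonneg ht0.le _)
      apply Real.exp_le_exp.2
      nlinarith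
  have hIa : Integrable (fun t : ℝ => (k+1) * (t ^ k * Real.exp (-t^2/2 - y*t))
      - t ^ (k+2) * Real.exp (-t^2/2 - y*t)) (volume.restrict (Set.Ioi 0)) :=
    (h0.const_mul _).sub h2
  have hIb : Integrable (fun t : ℝ => y * (t ^ (k+1) * Real.exp (-t^2/2 - y*t)))
      (volume.restrict (Set.Ioi 0)) := h1.const_mul _
  have hint : IntegrableOn (fun t : ℝ => (k+1) * (t ^ k * Real.exp (-t^2/2 - y*t))
      - t ^ (k+2) * Real.exp (-t^2/2 - y*t)
      - y * (t ^ (k+1) * Real.exp (-t^2/2 - y*t))) (Set.Ioi 0) := hIa.sub hIb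
  have key := integral_Ioi_of_hasDerivAt_of_tendsto hcont hderiv hint htop
  have hg0 : (0:ℝ) ^ (k+1) * Real.exp (-(0:ℝ)^2/2 - y*0) = 0 := by
    rw [Real.zero_rpow (by linarith : k+1 ≠ 0), zero_mul]
  rw [hg0, sub_zero] at key
  rw [integral_sub hIa hIb, integral_sub (h0.const_mul _) h2,
    integral_const_mul _ _, integral_const_mul _ _] at key
  rw [F, F, F]
  linarith [key]

lemma H_eq (μ x : ℝ) :
    H μ x = (2:ℝ)^(μ/2) / Real.Gamma (-μ) * F (-μ-1) (x * Real.sqrt 2) := by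
  have hG : G μ (x * Real.sqrt 2) = F (-μ-1) (x * Real.sqrt 2) := rfl
  have hs : (x * Real.sqrt 2)^2 = x^2*2 := by
    rw [mul_pow, Real.sq_sqrt (by norm_num : (0:ℝ) ≤ 2)]
  have he : Real.exp (x^2/2) * Real.exp (-(x^2*2)/4) = 1 := by
    rw [← Real.exp_add, show x^2/2 + -(x^2*2)/4 = 0 by ring, Real.exp_zero]
  rw [H, D, hs, hG]
  calc (2:ℝ)^(μ/2) * Real.exp (x^2/2) * (Real.exp (-(x^2*2)/4) / Real.Gamma (-μ)
        * F (-μ-1) (x * Real.sqrt 2))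
      = (2:ℝ)^(μ/2) / Real.Gamma (-μ) * F (-μ-1) (x * Real.sqrt 2)
        * (Real.exp (x^2/2) * Real.exp (-(x^2*2)/4)) := by ring
    _ = _ := by rw [he, mul_one]

lemma alg (c1 c2 c3 g aa A1 A2 A3 : ℝ) (hg : 0 < g) (ha : 0 < aa)
    (hc : c1^2 = c2*c3) (hc2 : 0 < c2) (hc3 : 0 < c3)
    (hkey : aa*(A1*A3) < (aa+1)*A2^2) :
    (c1/(aa*g)*A2)^2 - (c2/g*A1)*(c3/((aa+1)*(aa*g))*A3) > 0 := by
  have ha1 : (0:ℝ) < aa + 1 := by linarith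
  have heq : (c1/(aa*g)*A2)^2 - (c2/g*A1)*(c3/((aa+1)*(aa*g))*A3)
      = (c2*c3)/(aa^2*(aa+1)*g^2) * ((aa+1)*A2^2 - aa*(A1*A3)) := by
    rw [mul_pow, div_pow, hc]
    field_simp
  rw [heq]
  apply mul_pos
  · apply div_pos (mul_pos hc2 hc3)
    positivity
  · linarith

theorem stmt19 (ν : ℝ) (hν : ν < 0) (x : ℝ) :
    (H (ν - 1) x) ^ 2 - H ν x * H (ν - 2) x > 0 := by
  have ha : 0 < -ν := by linarith
  set y := x * Real.sqrt 2 with hy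
  have hH1 : H (ν-1) x = (2:ℝ)^((ν-1)/2) / Real.Gamma (-ν+1) * F (-ν) y := by
    rw [H_eq, show -(ν-1)-1 = -ν by ring, show -(ν-1) = -ν+1 by ring]
  have hH2 : H ν x = (2:ℝ)^(ν/2) / Real.Gamma (-ν) * F (-ν-1) y := H_eq ν x
  have hH3 : H (ν-2) x = (2:ℝ)^((ν-2)/2) / Real.Gamma (-ν+2) * F (-ν+1) y := by
    rw [H_eq, show -(ν-2)-1 = -ν+1 by ring, show -(ν-2) = -ν+2 by ring]
  have hg1 : Real.Gamma (-ν+1) = -ν * Real.Gamma (-ν) := Real.Gamma_add_one (ne_of_gt ha)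
  have hg2 : Real.Gamma (-ν+2) = (-ν+1) * (-ν * Real.Gamma (-ν)) := by
    rw [show -ν+2 = (-ν+1)+1 by ring, Real.Gamma_add_one (by linarith), hg1]
  have hΓ : 0 < Real.Gamma (-ν) := Real.Gamma_pos_of_pos ha
  have hR1 := parts (-ν-1) y (by linarith)
  rw [show -ν-1+2 = -ν+1 by ring, show -ν-1+1 = -ν by ring] at hR1
  have hR2 := parts (-ν) y (by linarith)
  have hCS := cs_lt (-ν) y (by linarith)
  have key : -ν * (F (-ν-1) y * F (-ν+1) y) < (-ν+1) * F (-ν) y ^ 2 := by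
    have e1 : -ν * (F (-ν-1) y * F (-ν+1) y)
        = (F (-ν+1) y + y * F (-ν) y) * F (-ν+1) y := by rw [hR1]; ring
    have e2 : (-ν+1) * F (-ν) y ^ 2
        = (F (-ν+2) y + y * F (-ν+1) y) * F (-ν) y := by rw [hR2]; ring
    rw [e1, e2]; nlinarith [hCS]
  have hc : ((2:ℝ)^((ν-1)/2))^2 = (2:ℝ)^(ν/2) * (2:ℝ)^((ν-2)/2) := by
    rw [sq, ← Real.rpow_add two_pos, ← Real.rpow_add two_pos]
    congr 1; ring
  rw [hH1, hH2, hH3, hg1, hg2]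
  exact alg _ _ _ _ _ _ _ _ hΓ ha hc (Real.rpow_pos_of_pos two_pos _)
    (Real.rpow_pos_of_pos two_pos _) key
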